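/- Let f : ℝⁿ → ℝ be convex, differentiable, and L-smooth with L > 0, and let x⋆ be a global minimizer of f. Let {x^k}, {y^k}, {t_k}, {f̂^k} be generated by the accelerated proximal bundle method (APBM) with models f̂^k satisfying Assumption 1. Then for every k ≥ 1, t_k² (f(x^k) − f(x⋆)) ≤ (f(x¹) − f(x⋆)) + (L/2)‖x⋆ − x¹‖². -/

import Mathlib

open scoped RealInnerProductSpace

section APBMaux
variable {F : Type*} [NormedAddCommGroup F] [InnerProductSpace ℝ F]

private theorem apbm_quad_id (a b y : F) (l : ℝ) :
    ‖(1 - l) • a + l • b - y‖ ^ 2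
      = (1 - l) * ‖a - y‖ ^ 2 + l * ‖b - y‖ ^ 2 - l * (1 - l) * ‖a - b‖ ^ 2 := by
  have h : ∀ w : F, ‖w‖ ^ 2 = ⟪w, w⟫ := fun w => (real_inner_self_eq_norm_sq w).symm
  have key : (1 - l) • a + l • b - y = (1 - l) • (a - y) + l • (b - y) := by module
  rw [h, h, h, h, key]
  simp only [inner_add_add_self, inner_sub_sub_self, real_inner_smul_left, real_inner_smul_right,
    inner_sub_left, inner_sub_right]
  ring_nf

private theorem apbm_vec_id (T : ℝ) (a b c y : F) :
    T * (T - 1) * (‖a - y‖ ^ 2 - ‖a - b‖ ^ 2) + T * (‖c - y‖ ^ 2 - ‖c - b‖ ^ 2)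
      = ‖T • y - (T - 1) • a - c‖ ^ 2 - ‖T • b - (T - 1) • a - c‖ ^ 2 := by
  have h : ∀ w : F, ‖w‖ ^ 2 = ⟪w, w⟫ := fun w => (real_inner_self_eq_norm_sq w).symm
  simp only [h, inner_sub_sub_self, inner_sub_left, inner_sub_right, real_inner_smul_left,
    real_inner_smul_right]
  ring_nf

private theorem apbm_prox_strong {L : ℝ} (hL : 0 < L) (φ : F → ℝ)
    (hφ : ConvexOn ℝ Set.univ φ)
    (yk xk : F) (hmin : ∀ z, φ xk + L / 2 * ‖xk - yk‖ ^ 2 ≤ φ z + L / 2 * ‖z - yk‖ ^ 2)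
    (z : F) :
    φ xk + L / 2 * ‖xk - yk‖ ^ 2 + L / 2 * ‖z - xk‖ ^ 2 ≤ φ z + L / 2 * ‖z - yk‖ ^ 2 := by
  set g : F → ℝ := fun w => φ w + L / 2 * ‖w - yk‖ ^ 2 with hg
  have key : ∀ l : ℝ, 0 < l → l ≤ 1 → g xk + L / 2 * (1 - l) * ‖z - xk‖ ^ 2 ≤ g z := by
    intro l hl0 hl1
    have hconv := hφ.2 (Set.mem_univ xk) (Set.mem_univ z) (by linarith : (0:ℝ) ≤ 1 - l)
      hl0.le (by ring)
    have hq := apbm_quad_id xk z yk l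
    have hm := hmin ((1 - l) • xk + l • z)
    rw [hq] at hm
    have hxz : ‖xk - z‖ ^ 2 = ‖z - xk‖ ^ 2 := by rw [norm_sub_rev]
    simp only [hg, smul_eq_mul] at *
    rw [hxz] at hm
    have h6 : l * (φ xk + L / 2 * ‖xk - yk‖ ^ 2 + L / 2 * (1 - l) * ‖z - xk‖ ^ 2)
        ≤ l * (φ z + L / 2 * ‖z - yk‖ ^ 2) := by nlinarith [hm, hconv]
    exact le_of_mul_le_mul_left h6 hl0
  have hlim : Filter.Tendsto (fun m : ℕ => g xk + L / 2 * (1 - 1 / (m + 1)) * ‖z - xk‖ ^ 2)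
      Filter.atTop (nhds (g xk + L / 2 * (1 - 0) * ‖z - xk‖ ^ 2)) := by
    apply Filter.Tendsto.const_add
    apply Filter.Tendsto.mul_const
    apply Filter.Tendsto.const_mul
    exact (tendsto_one_div_add_atTop_nhds_zero_nat).const_sub 1
  have := le_of_tendsto hlim (Filter.Eventually.of_forall fun m => by
    refine key (1 / (m + 1)) (by positivity) ?_
    rw [div_le_one (by positivity)]
    linarith [Nat.cast_nonneg (α := ℝ) m])
  simpa using this

variable [CompleteSpace F]

private theorem apbm_descent {L : ℝ} (f : F → ℝ) (hdiff : Differentiable ℝ f)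
    (hsmooth : ∀ u v, ‖gradient f u - gradient f v‖ ≤ L * ‖u - v‖) (x y : F) :
    f x ≤ f y + ⟪gradient f y, x - y⟫ + L / 2 * ‖x - y‖ ^ 2 := by
  set c : ℝ → F := fun s => y + s • (x - y) with hc
  have hcd : ∀ s : ℝ, HasDerivAt c (x - y) s := by
    intro s
    simpa [hc] using ((hasDerivAt_id s).smul_const (x - y)).const_add y
  have hg : ∀ s : ℝ, HasDerivAt (fun u => f (c u)) ⟪gradient f (c s), x - y⟫ s := by
    intro s
    have h1 : HasFDerivAt f (InnerProductSpace.toDual ℝ F (gradient f (c s))) (c s) :=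
      (hdiff (c s)).hasGradientAt.hasFDerivAt
    have := h1.comp_hasDerivAt s (hcd s)
    exact this
  set A : ℝ := ⟪gradient f y, x - y⟫ with hA
  set B : ℝ := ‖x - y‖ ^ 2 with hB
  set ψ : ℝ → ℝ := fun s => f (c s) - s * A - L / 2 * B * s ^ 2 with hψ
  have hψd : ∀ s : ℝ, HasDerivAt ψ (⟪gradient f (c s), x - y⟫ - A - L * B * s) s := by
    intro s
    have h2 : HasDerivAt (fun u : ℝ => u * A) A s := by
      simpa using (hasDerivAt_id s).mul_const A
    have h3 : HasDerivAt (fun u : ℝ => L / 2 * B * u ^ 2) (L / 2 * B * (2 * s)) s := by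
      simpa using (hasDerivAt_pow 2 s).const_mul (L / 2 * B)
    have := ((hg s).sub h2).sub h3
    exact this.congr_deriv (by ring)
  have hanti : AntitoneOn ψ (Set.Icc (0:ℝ) 1) := by
    apply antitoneOn_of_deriv_nonpos (convex_Icc 0 1)
    · exact fun s _ => ((hψd s).continuousAt).continuousWithinAt
    · exact fun s _ => ((hψd s).differentiableAt).differentiableWithinAt
    · intro s hs
      rw [interior_Icc] at hs
      rw [(hψd s).deriv]
      have h4 : ⟪gradient f (c s) - gradient f y, x - y⟫ ≤ L * B * s := by
        calc ⟪gradient f (c s) - gradient f y, x - y⟫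
            ≤ ‖gradient f (c s) - gradient f y‖ * ‖x - y‖ := real_inner_le_norm _ _
          _ ≤ L * ‖c s - y‖ * ‖x - y‖ := by
              have := hsmooth (c s) y
              nlinarith [norm_nonneg (x - y)]
          _ = L * B * s := by
              have : c s - y = s • (x - y) := by simp [hc]
              rw [this, norm_smul, Real.norm_eq_abs, abs_of_pos hs.1, hB]
              ring
      rw [inner_sub_left] at h4
      linarith
  have h01 := hanti (Set.left_mem_Icc.2 one_pos.le) (Set.right_mem_Icc.2 one_pos.le) one_pos.le
  have hc0 : c 0 = y := by simp [hc]
  have hc1 : c 1 = x := by simp [hc]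
  simp only [hψ, hc0, hc1] at h01
  nlinarith [h01]

end APBMaux

/-- Penultimate inequality in the proof of Theorem 1:
`t_k² (f(x^k) − f(x⋆)) ≤ (f(x¹) − f(x⋆)) + (L/2)‖x⋆ − x¹‖²` for all `k ≥ 1`. -/
theorem apbm_tk_bound {n : ℕ} {L : ℝ} (hL : 0 < L)
    (f : EuclideanSpace ℝ (Fin n) → ℝ)
    (hconv : ConvexOn ℝ Set.univ f)
    (hdiff : Differentiable ℝ f)
    (hsmooth : ∀ u v, ‖gradient f u - gradient f v‖ ≤ L * ‖u - v‖)
    (xstar : EuclideanSpace ℝ (Fin n)) (hmin : ∀ z, f xstar ≤ f z)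
    (x y : ℕ → EuclideanSpace ℝ (Fin n)) (t : ℕ → ℝ)
    (fhat : ℕ → EuclideanSpace ℝ (Fin n) → ℝ)
    (ht1 : t 1 = 1)
    (htrec : ∀ k ≥ 1, t (k + 1) = (1 + Real.sqrt (1 + 4 * t k ^ 2)) / 2)
    (hy1 : y 1 = x 0)
    (hxmin : ∀ k ≥ 1, ∀ z,
      fhat k (x k) + L / 2 * ‖x k - y k‖ ^ 2 ≤ fhat k z + L / 2 * ‖z - y k‖ ^ 2)
    (hyrec : ∀ k ≥ 1, y (k + 1) = x k + ((t k - 1) / t (k + 1)) • (x k - x (k - 1)))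
    (hmodel_convex : ∀ k ≥ 1, ConvexOn ℝ Set.univ (fhat k))
    (hmodel_lower : ∀ k ≥ 1, ∀ z,
      f (y k) + ⟪gradient f (y k), z - y k⟫ ≤ fhat k z)
    (hmodel_upper : ∀ k ≥ 1, ∀ z, fhat k z ≤ f z) :
    ∀ k ≥ 1,
      t k ^ 2 * (f (x k) - f xstar) ≤
        (f (x 1) - f xstar) + L / 2 * ‖xstar - x 1‖ ^ 2 := by
  -- key per-step inequality
  have hkey : ∀ k ≥ 1, ∀ z : EuclideanSpace ℝ (Fin n),
      f (x k) + L / 2 * ‖z - x k‖ ^ 2 ≤ f z + L / 2 * ‖z - y k‖ ^ 2 := by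
    intro k hk z
    have h1 : f (x k) ≤ fhat k (x k) + L / 2 * ‖x k - y k‖ ^ 2 := by
      have hd := apbm_descent f hdiff hsmooth (x k) (y k)
      have hl := hmodel_lower k hk (x k)
      linarith
    have h2 := apbm_prox_strong hL (fhat k) (hmodel_convex k hk) (y k) (x k)
      (hxmin k hk) z
    have h3 := hmodel_upper k hk z
    linarith
  -- properties of t
  have ht_ge : ∀ k ≥ 1, 1 ≤ t k := by
    intro k hk
    induction k with
    | zero => omega
    | succ m ih =>
      rcases Nat.eq_or_lt_of_le hk with h | h
      · rw [← h, ht1]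
      · have hm : 1 ≤ m := by omega
        rw [htrec m hm]
        have h5 : Real.sqrt 1 ≤ Real.sqrt (1 + 4 * t m ^ 2) :=
          Real.sqrt_le_sqrt (by nlinarith [sq_nonneg (t m)])
        rw [Real.sqrt_one] at h5
        linarith
  have ht_sq : ∀ k ≥ 1, t (k + 1) ^ 2 - t (k + 1) = t k ^ 2 := by
    intro k hk
    have hs : Real.sqrt (1 + 4 * t k ^ 2) ^ 2 = 1 + 4 * t k ^ 2 :=
      Real.sq_sqrt (by positivity)
    rw [htrec k hk]
    nlinarith [hs]
  -- Lyapunov function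
  set E : ℕ → ℝ := fun k =>
    t k ^ 2 * (f (x k) - f xstar) +
      L / 2 * ‖t k • x k - (t k - 1) • x (k - 1) - xstar‖ ^ 2 with hE
  have hstep : ∀ k ≥ 1, E (k + 1) ≤ E k := by
    intro k hk
    have hk1 : 1 ≤ k + 1 := by omega
    set T := t (k + 1) with hT
    have hT1 : 1 ≤ T := ht_ge (k + 1) hk1
    have hT0 : (0:ℝ) < T := by linarith
    have hA := hkey (k + 1) hk1 (x k)
    have hB := hkey (k + 1) hk1 xstar
    -- rewrite u_k via y_{k+1}
    have hu : T • y (k + 1) - (T - 1) • x k - xstar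
        = t k • x k - (t k - 1) • x (k - 1) - xstar := by
      rw [hyrec k hk, smul_add, smul_smul, mul_comm, div_mul_cancel₀ _ (ne_of_gt hT0)]
      module
    have hid := apbm_vec_id T (x k) (x (k + 1)) xstar (y (k + 1))
    rw [hu] at hid
    have hvk : 0 ≤ f (x k) - f xstar := by linarith [hmin (x k)]
    have hsq := ht_sq k hk
    have hTT : 0 ≤ T * (T - 1) := by nlinarith
    -- abstract everything to scalars
    simp only [hE]
    rw [show (k + 1) - 1 = k from rfl, ← hsq]
    set fk := f (x k)
    set fK := f (x (k + 1))
    set fs := f xstar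
    set P := ‖x k - y (k + 1)‖ ^ 2
    set Q := ‖x k - x (k + 1)‖ ^ 2
    set R := ‖xstar - y (k + 1)‖ ^ 2
    set S := ‖xstar - x (k + 1)‖ ^ 2
    set U := ‖t k • x k - (t k - 1) • x (k - 1) - xstar‖ ^ 2
    set V := ‖T • x (k + 1) - (T - 1) • x k - xstar‖ ^ 2
    have hA' := mul_le_mul_of_nonneg_left hA hTT
    have hB' := mul_le_mul_of_nonneg_left hB hT0.le
    nlinarith [hA', hB', hid]
  have hmono : ∀ k ≥ 1, E k ≤ E 1 := by
    intro k hk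
    induction k, hk using Nat.le_induction with
    | base => exact le_refl _
    | succ m hm ih => exact le_trans (hstep m hm) ih
  intro k hk
  have h1 : t k ^ 2 * (f (x k) - f xstar) ≤ E k := by
    simp only [hE]
    have := mul_nonneg (by linarith : (0:ℝ) ≤ L / 2)
      (sq_nonneg ‖t k • x k - (t k - 1) • x (k - 1) - xstar‖)
    linarith
  have hE1 : E 1 = (f (x 1) - f xstar) + L / 2 * ‖xstar - x 1‖ ^ 2 := by
    simp only [hE, ht1]
    rw [show (1:ℝ) • x 1 - ((1:ℝ) - 1) • x (1 - 1) - xstar = x 1 - xstar from by module,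
      ← norm_sub_rev xstar (x 1)]
    ring
  calc t k ^ 2 * (f (x k) - f xstar) ≤ E k := h1
    _ ≤ E 1 := hmono k hk
    _ = _ := hE1
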